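/- Let v₁, w₁, v₂, w₂ ∈ ℝ³ with each pair {vᵢ, wᵢ} linearly independent, and suppose the 3×4 matrix M = [v₁ | w₁ | −v₂ | −w₂] has rank 2 (so both pairs span the same plane). Then the cones Cone(v₁,w₁) and Cone(v₂,w₂) intersect in a point other than the origin if and only if one of v₁, w₁ is a nonnegative linear combination of v₂, w₂, or one of v₂, w₂ is a nonnegative linear combination of v₁, w₁. -/

import Mathlib

open Submodule Matrix

lemma key_cone (a b c d A B : ℝ) (hΔ : 0 < a*d - b*c)
    (hA : 0 ≤ A) (hB : 0 ≤ B) (hAB : 0 < A ∨ 0 < B)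
    (hx : 0 ≤ A*a + B*c) (hy : 0 ≤ A*b + B*d) :
    (0 ≤ a ∧ 0 ≤ b) ∨ (0 ≤ c ∧ 0 ≤ d) ∨ (0 ≤ d ∧ b ≤ 0) ∨ (0 ≤ a ∧ c ≤ 0) := by
  rcases le_or_gt 0 a with ha | ha <;>
  rcases le_or_gt b 0 with hb | hb <;>
  rcases le_or_gt c 0 with hc | hc <;>
  rcases le_or_gt 0 d with hd | hd <;>
  first
  | exact Or.inl ⟨by linarith, by linarith⟩
  | exact Or.inr (Or.inl ⟨by linarith, by linarith⟩)
  | exact Or.inr (Or.inr (Or.inl ⟨by linarith, by linarith⟩))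
  | exact Or.inr (Or.inr (Or.inr ⟨by linarith, by linarith⟩))
  | (exfalso; rcases hAB with h | h <;>
     nlinarith [mul_pos h hΔ, mul_nonneg hA hB, mul_nonneg (mul_nonneg hA hA) hB,
       mul_nonneg hA (mul_nonneg hB hB)])

theorem stmt_10
    (v₁ w₁ v₂ w₂ : Fin 3 → ℝ)
    (h1 : LinearIndependent ℝ ![v₁, w₁])
    (h2 : LinearIndependent ℝ ![v₂, w₂])
    (M : Matrix (Fin 3) (Fin 4) ℝ)
    (hM : M = Matrix.of fun i j => ![v₁ i, w₁ i, -v₂ i, -w₂ i] j)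
    (hrank : M.rank = 2) :
    (∃ x : Fin 3 → ℝ, x ≠ 0 ∧
        x ∈ {y : Fin 3 → ℝ | ∃ A B : ℝ, 0 ≤ A ∧ 0 ≤ B ∧ y = A • v₁ + B • w₁} ∧
        x ∈ {y : Fin 3 → ℝ | ∃ A B : ℝ, 0 ≤ A ∧ 0 ≤ B ∧ y = A • v₂ + B • w₂}) ↔
      ((∃ A B : ℝ, 0 ≤ A ∧ 0 ≤ B ∧ v₁ = A • v₂ + B • w₂) ∨
       (∃ A B : ℝ, 0 ≤ A ∧ 0 ≤ B ∧ w₁ = A • v₂ + B • w₂) ∨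
       (∃ A B : ℝ, 0 ≤ A ∧ 0 ≤ B ∧ v₂ = A • v₁ + B • w₁) ∨
       (∃ A B : ℝ, 0 ≤ A ∧ 0 ≤ B ∧ w₂ = A • v₁ + B • w₁)) := by
  have hv1ne : v₁ ≠ 0 := by simpa using h1.ne_zero 0
  have hw1ne : w₁ ≠ 0 := by simpa using h1.ne_zero 1
  have hv2ne : v₂ ≠ 0 := by simpa using h2.ne_zero 0
  have hw2ne : w₂ ≠ 0 := by simpa using h2.ne_zero 1
  have hp1 : ∀ s t : ℝ, s • v₁ + t • w₁ = 0 → s = 0 ∧ t = 0 :=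
    LinearIndependent.pair_iff.mp h1
  have hp2 : ∀ s t : ℝ, s • v₂ + t • w₂ = 0 → s = 0 ∧ t = 0 :=
    LinearIndependent.pair_iff.mp h2
  -- span equality
  have hspan : span ℝ ({v₁, w₁} : Set (Fin 3 → ℝ)) = span ℝ {v₂, w₂} := by
    have hcol : ∀ j, Mᵀ j = ![v₁, w₁, -v₂, -w₂] j := by
      intro j
      funext i
      fin_cases j <;> simp [hM, Matrix.transpose_apply]
    have hr1 : Set.range ![v₁, w₁] = {v₁, w₁} := by
      simp [Matrix.range_cons, Matrix.range_empty, Set.pair_comm]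
    have hr2 : Set.range ![v₂, w₂] = {v₂, w₂} := by
      simp [Matrix.range_cons, Matrix.range_empty, Set.pair_comm]
    have hf1 : Module.finrank ℝ (span ℝ ({v₁, w₁} : Set (Fin 3 → ℝ))) = 2 := by
      rw [← hr1, finrank_span_eq_card h1]; simp
    have hf2 : Module.finrank ℝ (span ℝ ({v₂, w₂} : Set (Fin 3 → ℝ))) = 2 := by
      rw [← hr2, finrank_span_eq_card h2]; simp
    have hfC : Module.finrank ℝ (span ℝ (Set.range Mᵀ)) = 2 := by
      have := M.rank_eq_finrank_span_cols; rw [hrank] at this; exact this.symm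
    have hle1 : span ℝ ({v₁, w₁} : Set (Fin 3 → ℝ)) ≤ span ℝ (Set.range Mᵀ) := by
      apply span_le.2
      rintro x (rfl | rfl)
      · exact subset_span ⟨0, (hcol 0).trans rfl⟩
      · exact subset_span ⟨1, (hcol 1).trans rfl⟩
    have hle2 : span ℝ ({v₂, w₂} : Set (Fin 3 → ℝ)) ≤ span ℝ (Set.range Mᵀ) := by
      have m2 : (-v₂ : Fin 3 → ℝ) ∈ span ℝ (Set.range Mᵀ) := subset_span ⟨2, (hcol 2).trans rfl⟩
      have m3 : (-w₂ : Fin 3 → ℝ) ∈ span ℝ (Set.range Mᵀ) := subset_span ⟨3, (hcol 3).trans rfl⟩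
      apply span_le.2
      rw [Set.insert_subset_iff, Set.singleton_subset_iff]
      exact ⟨by simpa using neg_mem m2, by simpa using neg_mem m3⟩
    have e1 := Submodule.eq_of_le_of_finrank_le hle1 (by rw [hf1, hfC])
    have e2 := Submodule.eq_of_le_of_finrank_le hle2 (by rw [hf2, hfC])
    rw [e1, e2]
  -- coordinates of v₁, w₁ in basis (v₂, w₂)
  obtain ⟨a, b, hv₁⟩ : ∃ a b : ℝ, a • v₂ + b • w₂ = v₁ := by
    rw [← mem_span_pair, ← hspan]
    exact subset_span (Set.mem_insert _ _)
  obtain ⟨c, d, hw₁⟩ : ∃ c d : ℝ, c • v₂ + d • w₂ = w₁ := by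
    rw [← mem_span_pair, ← hspan]
    exact subset_span (Set.mem_insert_of_mem _ rfl)
  replace hv₁ := hv₁.symm
  replace hw₁ := hw₁.symm
  -- Δ ≠ 0
  have hΔne : a * d - b * c ≠ 0 := by
    intro h
    have e₁ : d • v₁ + (-b) • w₁ = 0 := by
      rw [hv₁, hw₁]; funext i
      simp only [Pi.add_apply, Pi.smul_apply, Pi.zero_apply, smul_eq_mul]
      linear_combination v₂ i * h
    have e₂ : (-c) • v₁ + a • w₁ = 0 := by
      rw [hv₁, hw₁]; funext i
      simp only [Pi.add_apply, Pi.smul_apply, Pi.zero_apply, smul_eq_mul]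
      linear_combination w₂ i * h
    obtain ⟨hd0, hb0⟩ := hp1 _ _ e₁
    obtain ⟨hc0, ha0⟩ := hp1 _ _ e₂
    apply hv1ne
    rw [hv₁, ha0, show b = 0 by linarith]
    simp
  constructor
  · rintro ⟨x, hx0, ⟨A, B, hA, hB, hx1⟩, ⟨C, D, hC, hD, hx2⟩⟩
    have heq : A • v₁ + B • w₁ = C • v₂ + D • w₂ := hx1 ▸ hx2 ▸ rfl
    rw [hv₁, hw₁] at heq
    have hz : (A*a + B*c - C) • v₂ + (A*b + B*d - D) • w₂ = 0 := by
      funext i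
      have h := congrFun heq i
      simp only [Pi.add_apply, Pi.smul_apply, Pi.zero_apply, smul_eq_mul] at h ⊢
      linear_combination h
    obtain ⟨e1, e2⟩ := hp2 _ _ hz
    have hxc : 0 ≤ A*a + B*c := by linarith
    have hyc : 0 ≤ A*b + B*d := by linarith
    have hAB : 0 < A ∨ 0 < B := by
      by_contra h
      push_neg at h
      apply hx0
      rw [hx1, le_antisymm h.1 hA, le_antisymm h.2 hB]
      simp
    set Δ := a * d - b * c with hΔdef
    -- helper equations
    have hv₂eq : v₂ = (d / Δ) • v₁ + (-b / Δ) • w₁ := by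
      rw [hv₁, hw₁]; funext i
      simp only [Pi.add_apply, Pi.smul_apply, smul_eq_mul]
      field_simp
      ring
    have hw₂eq : w₂ = (-c / Δ) • v₁ + (a / Δ) • w₁ := by
      rw [hv₁, hw₁]; funext i
      simp only [Pi.add_apply, Pi.smul_apply, smul_eq_mul]
      field_simp
      ring
    rcases lt_or_gt_of_ne hΔne with hΔneg | hΔpos
    · -- Δ < 0 : apply key_cone with swapped pairs
      have h' : 0 < c * b - d * a := by nlinarith
      rcases key_cone c d a b B A h' hB hA hAB.symm (by linarith) (by linarith) with
        ⟨h₁, h₂⟩ | ⟨h₁, h₂⟩ | ⟨h₁, h₂⟩ | ⟨h₁, h₂⟩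
      · exact Or.inr (Or.inl ⟨c, d, h₁, h₂, hw₁⟩)
      · exact Or.inl ⟨a, b, h₁, h₂, hv₁⟩
      · exact Or.inr (Or.inr (Or.inl ⟨d / Δ, -b / Δ,
          div_nonneg_of_nonpos h₂ hΔneg.le,
          div_nonneg_of_nonpos (by linarith) hΔneg.le, hv₂eq⟩))
      · exact Or.inr (Or.inr (Or.inr ⟨-c / Δ, a / Δ,
          div_nonneg_of_nonpos (by linarith) hΔneg.le,
          div_nonneg_of_nonpos h₂ hΔneg.le, hw₂eq⟩))
    · -- Δ > 0
      rcases key_cone a b c d A B hΔpos hA hB hAB hxc hyc with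
        ⟨h₁, h₂⟩ | ⟨h₁, h₂⟩ | ⟨h₁, h₂⟩ | ⟨h₁, h₂⟩
      · exact Or.inl ⟨a, b, h₁, h₂, hv₁⟩
      · exact Or.inr (Or.inl ⟨c, d, h₁, h₂, hw₁⟩)
      · exact Or.inr (Or.inr (Or.inl ⟨d / Δ, -b / Δ,
          div_nonneg h₁ hΔpos.le, div_nonneg (by linarith) hΔpos.le, hv₂eq⟩))
      · exact Or.inr (Or.inr (Or.inr ⟨-c / Δ, a / Δ,
          div_nonneg (by linarith) hΔpos.le, div_nonneg h₁ hΔpos.le, hw₂eq⟩))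
  · rintro (⟨A, B, hA, hB, h⟩ | ⟨A, B, hA, hB, h⟩ | ⟨A, B, hA, hB, h⟩ | ⟨A, B, hA, hB, h⟩)
    · exact ⟨v₁, hv1ne, ⟨1, 0, zero_le_one, le_refl 0, by simp⟩, ⟨A, B, hA, hB, h⟩⟩
    · exact ⟨w₁, hw1ne, ⟨0, 1, le_refl 0, zero_le_one, by simp⟩, ⟨A, B, hA, hB, h⟩⟩
    · exact ⟨v₂, hv2ne, ⟨A, B, hA, hB, h⟩, ⟨1, 0, zero_le_one, le_refl 0, by simp⟩⟩
    · exact ⟨w₂, hw2ne, ⟨A, B, hA, hB, h⟩, ⟨0, 1, le_refl 0, zero_le_one, by simp⟩⟩
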